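/- Let M be a matroid on a finite ground set E, let ∅ = S₀ ⊊ S₁ ⊊ ⋯ ⊊ S_k ⊊ S_{k+1} = E be a chain of subsets, and let ≤ be a linear order on E such that every element of S_{i+1}∖S_i precedes every element of S_{j+1}∖S_j whenever i < j. Then B_≤(M) = ⋃_{i=0}^{k} B_{≤ᵢ}(M|S_{i+1}/S_i), where ≤ᵢ denotes the restriction of ≤ to S_{i+1}∖S_i and M|S_{i+1}/S_i is the minor of M on ground set S_{i+1}∖S_i obtained by restricting to S_{i+1} and contracting S_i. -/

import Mathlib

open Matroid

variable {α : Type*}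

/-- `B₀` is the lex-first basis of the matroid `M` with respect to the order relation `le`:
it is a basis, and for every other basis `B'`, the `le`-least element of the symmetric
difference `B₀ ∆ B'` belongs to `B₀`. -/
def IsLexFirstBasis (M : Matroid α) (le : α → α → Prop) (B₀ : Set α) : Prop :=
  M.IsBase B₀ ∧ ∀ B', M.IsBase B' → B' ≠ B₀ →
    ∀ m ∈ symmDiff B₀ B', (∀ x ∈ symmDiff B₀ B', le m x) → m ∈ B₀

/-- Deletion of a set `D` from the matroid `M`: the restriction of `M` to `M.E \ D`. -/
def mdelete (M : Matroid α) (D : Set α) : Matroid α := M ↾ (M.E \ D)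

/-- Contraction of a set `C` in the matroid `M`, defined via duality:
`M / C = (M✶ \ C)✶`, a matroid on `M.E \ C`. -/
def mcontract (M : Matroid α) (C : Set α) : Matroid α := (M✶ ↾ (M.E \ C))✶

open Set

lemma finset_exists_le_min (le : α → α → Prop) (hlin : IsLinearOrder α le) :
    ∀ s : Finset α, s.Nonempty → ∃ m ∈ s, ∀ x ∈ s, le m x := by
  classical
  intro s
  induction s using Finset.induction_on with
  | empty => simp
  | @insert a s ha ih =>
    intro _
    rcases s.eq_empty_or_nonempty with rfl | hs
    · exact ⟨a, by simp, by simp [hlin.refl a]⟩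
    · obtain ⟨m, hm, hmin⟩ := ih hs
      rcases hlin.total a m with h | h
      · exact ⟨a, by simp, by
          intro x hx
          rcases Finset.mem_insert.mp hx with rfl | hx
          · exact hlin.refl x
          · exact hlin.trans _ _ _ h (hmin x hx)⟩
      · exact ⟨m, by simp [hm], by
          intro x hx
          rcases Finset.mem_insert.mp hx with rfl | hx
          · exact h
          · exact hmin x hx⟩

lemma set_exists_le_min (le : α → α → Prop) (hlin : IsLinearOrder α le)
    {T : Set α} (hfin : T.Finite) (hne : T.Nonempty) :
    ∃ m ∈ T, ∀ x ∈ T, le m x := by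
  obtain ⟨m, hm, hmin⟩ := finset_exists_le_min le hlin hfin.toFinset
    (by simpa [Set.Finite.toFinset_nonempty] using hne)
  exact ⟨m, by simpa using hm, fun x hx => hmin x (by simpa using hx)⟩

lemma lexFirst_unique [Fintype α] {M : Matroid α} {le : α → α → Prop}
    (hlin : IsLinearOrder α le) {B₁ B₂ : Set α}
    (h₁ : IsLexFirstBasis M le B₁) (h₂ : IsLexFirstBasis M le B₂) : B₁ = B₂ := by
  by_contra hne
  have hsd : (symmDiff B₁ B₂).Nonempty := by
    rw [Set.nonempty_iff_ne_empty]
    intro h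
    exact hne (by rwa [← Set.bot_eq_empty, symmDiff_eq_bot] at h)
  obtain ⟨m, hm, hmin⟩ := set_exists_le_min le hlin (Set.toFinite _) hsd
  have hm1 := h₁.2 B₂ h₂.1 (fun h => hne h.symm) m hm hmin
  have hm2 := h₂.2 B₁ h₁.1 hne m (by rwa [symmDiff_comm])
    (by rw [symmDiff_comm]; exact hmin)
  rw [Set.mem_symmDiff] at hm
  tauto

lemma mcontract_base_iff {N : Matroid α} {C B₂ : Set α} (hC : C ⊆ N.E) :
    (mcontract N C).IsBase B₂ ↔ N✶.IsBasis ((N.E \ C) \ B₂) (N.E \ C) ∧ B₂ ⊆ N.E \ C := by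
  unfold mcontract
  rw [dual_isBase_iff', restrict_ground_eq, isBase_restrict_iff (by rw [dual_ground]; exact diff_subset)]

lemma base_swap [Fintype α] {N : Matroid α} {D C I : Set α}
    (hD : N.IsBase D) (hDC : N.IsBasis (D ∩ C) C) (hI : N.IsBasis I C) :
    N.IsBase (I ∪ (D \ C)) := by
  obtain ⟨B₃, hB₃, hIB₃, hB₃sub⟩ := hI.indep.exists_isBase_subset_union_isBase hD
  have hB₃C : B₃ ∩ C = I :=
    (hI.eq_of_subset_indep (hB₃.indep.subset inter_subset_left)
      (subset_inter hIB₃ hI.subset) inter_subset_right).symm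
  have hsub : B₃ \ C ⊆ D \ C := by
    intro x hx
    rcases hB₃sub hx.1 with h | h
    · exact absurd (hI.subset h) hx.2
    · exact ⟨h, hx.2⟩
  have hcard : (D \ C).encard ≤ (B₃ \ C).encard := by
    have h1 : (B₃ \ C).encard + (B₃ ∩ C).encard = B₃.encard :=
      Set.encard_diff_add_encard_inter B₃ C
    have h2 : (D \ C).encard + (D ∩ C).encard = D.encard :=
      Set.encard_diff_add_encard_inter D C
    have h3 : B₃.encard = D.encard := hB₃.encard_eq_encard_of_isBase hD
    have h4 : (B₃ ∩ C).encard = (D ∩ C).encard := by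
      rw [hB₃C]; exact hI.encard_eq_encard hDC
    have h5 : (B₃ \ C).encard + (D ∩ C).encard = (D \ C).encard + (D ∩ C).encard :=
      calc (B₃ \ C).encard + (D ∩ C).encard = (B₃ \ C).encard + (B₃ ∩ C).encard := by rw [h4]
        _ = B₃.encard := h1
        _ = D.encard := h3
        _ = (D \ C).encard + (D ∩ C).encard := h2.symm
    exact le_of_eq (WithTop.add_right_cancel (Set.toFinite (D ∩ C)).encard_lt_top.ne h5).symm
  have heq : B₃ \ C = D \ C := (Set.toFinite (B₃ \ C)).eq_of_subset_of_encard_le hsub hcard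
  have : I ∪ (D \ C) = B₃ := by rw [← heq, ← hB₃C, Set.inter_union_diff]
  rwa [this]

lemma mcontract_base_union_iff [Fintype α] {N : Matroid α} {C I B₂ : Set α}
    (hC : C ⊆ N.E) (hI : N.IsBasis I C) (hB₂ : B₂ ⊆ N.E \ C) :
    (mcontract N C).IsBase B₂ ↔ N.IsBase (I ∪ B₂) := by
  constructor
  · intro h
    rw [mcontract_base_iff hC] at h
    obtain ⟨hJ, -⟩ := h
    obtain ⟨Bs, hBs, hJBs⟩ := hJ.indep.exists_isBase_superset
    have hJeq : Bs ∩ (N.E \ C) = (N.E \ C) \ B₂ :=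
      (hJ.eq_of_subset_indep (hBs.indep.subset inter_subset_left)
        (subset_inter hJBs diff_subset) inter_subset_right).symm
    have hbasis : N✶.IsBasis (Bs ∩ (N.E \ C)) (N.E \ C) := by rw [hJeq]; exact hJ
    have hdual := (hBs.inter_isBasis_iff_compl_inter_isBasis_dual
      (X := N.E \ C) (by rw [dual_ground]; exact diff_subset)).mp hbasis
    rw [dual_dual, dual_ground, Set.diff_diff_cancel_left hC] at hdual
    have hDbase : N.IsBase (N.E \ Bs) := hBs.compl_isBase_of_dual
    have hDdiff : (N.E \ Bs) \ C = B₂ := by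
      rw [Set.diff_diff_comm, ← Set.diff_inter_self_eq_diff (t := Bs), hJeq,
        Set.diff_diff_cancel_left hB₂]
    have := base_swap hDbase hdual hI
    rwa [hDdiff] at this
  · intro h
    rw [mcontract_base_iff hC]
    refine ⟨?_, hB₂⟩
    have hB₂C : B₂ ∩ C = ∅ := by
      rw [Set.eq_empty_iff_forall_notMem]
      exact fun x hx => (hB₂ hx.1).2 hx.2
    have hIC : (I ∪ B₂) ∩ C = I := by
      rw [Set.union_inter_distrib_right, Set.inter_eq_self_of_subset_left hI.subset, hB₂C,
        Set.union_empty]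
    have hdual := (h.inter_isBasis_iff_compl_inter_isBasis_dual (X := C) hC).mp
      (by rw [hIC]; exact hI)
    have heq : (N.E \ (I ∪ B₂)) ∩ (N.E \ C) = (N.E \ C) \ B₂ := by
      ext x
      have hxI : x ∈ I → x ∈ C := fun hx => hI.subset hx
      simp only [Set.mem_inter_iff, Set.mem_diff, Set.mem_union]
      tauto
    rwa [heq] at hdual

/-- For a chain `∅ = S₀ ⊊ S₁ ⊊ ⋯ ⊊ S_{k+1} = E` and a linear order in which the blocks
`S_{i+1} ∖ S_i` appear consecutively in increasing order of `i`, the lex-first basis of `M`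
is the union over `i` of the lex-first bases of the minors `M|S_{i+1}/S_i`. -/
theorem stmt13 [Fintype α] (M : Matroid α) (k : ℕ)
    (S : Fin (k + 2) → Set α) (hS0 : S 0 = ∅) (hSlast : S (Fin.last (k + 1)) = M.E)
    (hchain : ∀ i : Fin (k + 1), S i.castSucc ⊂ S i.succ)
    (le : α → α → Prop) (hlin : IsLinearOrder α le)
    (hcompat : ∀ i j : Fin (k + 1), i < j →
      ∀ x ∈ S i.succ \ S i.castSucc, ∀ y ∈ S j.succ \ S j.castSucc, le x y ∧ x ≠ y)
    (B : Set α) (hB : IsLexFirstBasis M le B)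
    (Bm : Fin (k + 1) → Set α)
    (hBm : ∀ i, IsLexFirstBasis (mcontract (M ↾ S i.succ) (S i.castSucc)) le (Bm i)) :
    B = ⋃ i, Bm i := by
  classical
  obtain ⟨hBbase, hBlex⟩ := hB
  -- monotonicity of the chain
  have key0 : ∀ (b : ℕ) (hb : b < k + 2) (a : ℕ) (ha : a < k + 2), a ≤ b →
      S ⟨a, ha⟩ ⊆ S ⟨b, hb⟩ := by
    intro b
    induction b with
    | zero =>
      intro hb a ha hab
      obtain rfl : a = 0 := Nat.le_zero.mp hab
      exact subset_rfl
    | succ n ih =>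
      intro hb a ha hab
      rcases Nat.lt_or_ge a (n + 1) with h | h
      · have h1 : S ⟨a, ha⟩ ⊆ S ⟨n, by omega⟩ := ih (by omega) a ha (by omega)
        have h2 : S (⟨n, by omega⟩ : Fin (k + 1)).castSucc ⊆ S (⟨n, by omega⟩ : Fin (k + 1)).succ :=
          (hchain ⟨n, by omega⟩).subset
        have e1 : ((⟨n, by omega⟩ : Fin (k + 1)).castSucc : Fin (k + 2)) = ⟨n, by omega⟩ := rfl
        have e2 : ((⟨n, by omega⟩ : Fin (k + 1)).succ : Fin (k + 2)) = ⟨n + 1, hb⟩ := rfl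
        rw [e1, e2] at h2
        exact h1.trans h2
      · obtain rfl : a = n + 1 := by omega
        exact subset_rfl
  have hmono : ∀ a b : Fin (k + 2), a ≤ b → S a ⊆ S b := by
    intro a b hab
    have := key0 b.1 b.2 a.1 a.2 hab
    simpa using this
  have hSE : ∀ a : Fin (k + 2), S a ⊆ M.E := fun a => by
    rw [← hSlast]; exact hmono a (Fin.last _) (Fin.le_last a)
  -- every element of the ground set lies in a unique block
  have hblock : ∀ x ∈ M.E, ∃ j : Fin (k + 1), x ∈ S j.succ ∧ x ∉ S j.castSucc := by
    intro x hx
    have hP : ∃ n, ∃ h : n < k + 2, x ∈ S ⟨n, h⟩ :=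
      ⟨k + 1, by omega, by
        rw [show (⟨k + 1, by omega⟩ : Fin (k + 2)) = Fin.last (k + 1) from rfl, hSlast]
        exact hx⟩
    obtain ⟨hn, hxn⟩ := Nat.find_spec hP
    have hn0 : Nat.find hP ≠ 0 := by
      intro h
      have hx0 : x ∈ S ⟨Nat.find hP, hn⟩ := hxn
      rw [show (⟨Nat.find hP, hn⟩ : Fin (k + 2)) = ⟨0, by omega⟩ from by simp [h],
        show (⟨0, by omega⟩ : Fin (k + 2)) = 0 from rfl, hS0] at hx0
      exact hx0
    obtain ⟨m, hm⟩ := Nat.exists_eq_succ_of_ne_zero hn0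
    have hmk : m < k + 1 := by omega
    refine ⟨⟨m, hmk⟩, ?_, ?_⟩
    · have : ((⟨m, hmk⟩ : Fin (k + 1)).succ : Fin (k + 2)) = ⟨m + 1, by omega⟩ := rfl
      rw [this]
      rw [show (⟨Nat.find hP, hn⟩ : Fin (k + 2)) = ⟨m + 1, by omega⟩ from by simp [hm]] at hxn
      exact hxn
    · intro hxc
      have hlt : m < Nat.find hP := by omega
      exact Nat.find_min hP hlt ⟨by omega, hxc⟩
  -- the cross lemma: elements in an initial set precede elements outside it
  have hcross : ∀ t : Fin (k + 2), ∀ x ∈ S t, ∀ y, y ∈ M.E → y ∉ S t → le x y ∧ x ≠ y := by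
    intro t x hx y hyE hy
    obtain ⟨j₁, hj₁s, hj₁c⟩ := hblock x (hSE t hx)
    obtain ⟨j₂, hj₂s, hj₂c⟩ := hblock y hyE
    have h1 : (j₁ : ℕ) < (t : ℕ) := by
      by_contra h
      exact hj₁c (hmono t j₁.castSucc (by simp [Fin.le_def]; omega) hx)
    have h2 : (t : ℕ) ≤ (j₂ : ℕ) := by
      by_contra h
      exact hy (hmono j₂.succ t (by simp [Fin.le_def]; omega) hj₂s)
    exact hcompat j₁ j₂ (by rw [Fin.lt_def]; omega) x ⟨hj₁s, hj₁c⟩ y ⟨hj₂s, hj₂c⟩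
  -- step (a): B ∩ S t is a basis of S t
  have hinit : ∀ t : Fin (k + 2), M.IsBasis (B ∩ S t) (S t) := by
    intro t
    by_contra hnot
    have hindep : M.Indep (B ∩ S t) := hBbase.indep.subset inter_subset_left
    obtain ⟨J, hJ⟩ := M.exists_isBasis (S t) (hSE t)
    obtain ⟨e, he, hins⟩ := hindep.exists_insert_of_not_isBasis inter_subset_right hnot hJ
    have heSt : e ∈ S t := hJ.subset he.1
    have heB : e ∉ B := fun h => he.2 ⟨h, heSt⟩
    obtain ⟨B', hB', hsub1, hsub2⟩ := hins.exists_isBase_subset_union_isBase hBbase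
    have heB' : e ∈ B' := hsub1 (mem_insert e _)
    have hB'sub : B' ⊆ insert e B := by
      intro x hx
      rcases hsub2 hx with h | h
      · rcases h with h | h
        · exact h ▸ mem_insert e B
        · exact mem_insert_of_mem _ h.1
      · exact mem_insert_of_mem _ h
    have hne : B' ≠ B := fun h => heB (h ▸ heB')
    have hmem : e ∈ symmDiff B B' := Set.mem_symmDiff.mpr (Or.inr ⟨heB', heB⟩)
    have hleast : ∀ x ∈ symmDiff B B', le e x := by
      intro x hx
      rcases Set.mem_symmDiff.mp hx with ⟨hxB, hxB'⟩ | ⟨hxB', hxB⟩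
      · have hxSt : x ∉ S t := fun hxt => hxB' (hsub1 (mem_insert_of_mem _ ⟨hxB, hxt⟩))
        exact (hcross t e heSt x (hBbase.subset_ground hxB) hxSt).1
      · obtain rfl : x = e := by
          rcases hB'sub hxB' with h | h
          · exact h
          · exact absurd h hxB
        exact hlin.refl x
    exact heB (hBlex B' hB' hne e hmem hleast)
  -- step (b)+(c): B ∩ (block i) is the lex-first basis of the minor
  have key : ∀ i : Fin (k + 1), IsLexFirstBasis
      (mcontract (M ↾ S i.succ) (S i.castSucc)) le (B ∩ (S i.succ \ S i.castSucc)) := by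
    intro i
    have hcs : S i.castSucc ⊆ S i.succ := hmono _ _ (Fin.castSucc_le_succ i)
    have hNE : (M ↾ S i.succ).E = S i.succ := restrict_ground_eq
    have hCN : S i.castSucc ⊆ (M ↾ S i.succ).E := by rw [hNE]; exact hcs
    have hIbasisN : (M ↾ S i.succ).IsBasis (B ∩ S i.castSucc) (S i.castSucc) :=
      (hinit i.castSucc).isBasis_restrict_of_subset hcs
    have hblkE : (M ↾ S i.succ).E \ S i.castSucc = S i.succ \ S i.castSucc := by rw [hNE]
    have hB₂sub : B ∩ (S i.succ \ S i.castSucc) ⊆ (M ↾ S i.succ).E \ S i.castSucc := by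
      rw [hblkE]; exact inter_subset_right
    have hunion : (B ∩ S i.castSucc) ∪ (B ∩ (S i.succ \ S i.castSucc)) = B ∩ S i.succ := by
      rw [← Set.inter_union_distrib_left, Set.union_diff_cancel hcs]
    have hNbase : (M ↾ S i.succ).IsBase (B ∩ S i.succ) :=
      (isBase_restrict_iff (hSE i.succ)).mpr (hinit i.succ)
    constructor
    · exact (mcontract_base_union_iff hCN hIbasisN hB₂sub).mpr (hunion ▸ hNbase)
    · intro B₂ hB₂base hB₂ne m hm hmle
      have hB₂E : B₂ ⊆ (M ↾ S i.succ).E \ S i.castSucc := by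
        have := hB₂base.subset_ground
        simpa [mcontract] using this
      have hB₂blk : B₂ ⊆ S i.succ \ S i.castSucc := by rwa [hblkE] at hB₂E
      have hD'base : (M ↾ S i.succ).IsBase ((B ∩ S i.castSucc) ∪ B₂) :=
        (mcontract_base_union_iff hCN hIbasisN hB₂E).mp hB₂base
      have hD'basis : M.IsBasis ((B ∩ S i.castSucc) ∪ B₂) (S i.succ) :=
        (isBase_restrict_iff (hSE i.succ)).mp hD'base
      have hfull : M.IsBase (((B ∩ S i.castSucc) ∪ B₂) ∪ (B \ S i.succ)) :=
        base_swap hBbase (hinit i.succ) hD'basis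
      have hsd : symmDiff B (((B ∩ S i.castSucc) ∪ B₂) ∪ (B \ S i.succ))
          = symmDiff (B ∩ (S i.succ \ S i.castSucc)) B₂ := by
        ext x
        have hx1 : x ∈ B₂ → x ∈ S i.succ ∧ x ∉ S i.castSucc := fun h => hB₂blk h
        have hx2 : x ∈ S i.castSucc → x ∈ S i.succ := fun h => hcs h
        simp only [Set.mem_symmDiff, Set.mem_union, Set.mem_inter_iff, Set.mem_diff]
        tauto
      have hmB : m ∈ symmDiff B (((B ∩ S i.castSucc) ∪ B₂) ∪ (B \ S i.succ)) := by
        rw [hsd]; exact hm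
      have hDne : ((B ∩ S i.castSucc) ∪ B₂) ∪ (B \ S i.succ) ≠ B := by
        intro h
        rw [h] at hmB
        simp [symmDiff_self] at hmB
      have hmle' : ∀ x ∈ symmDiff B (((B ∩ S i.castSucc) ∪ B₂) ∪ (B \ S i.succ)), le m x := by
        intro x hx
        exact hmle x (by rwa [hsd] at hx)
      have hmInB := hBlex _ hfull hDne m hmB hmle'
      rcases Set.mem_symmDiff.mp hm with h | h
      · exact h.1
      · exact ⟨hmInB, hB₂blk h.1⟩
  have heq : ∀ i, Bm i = B ∩ (S i.succ \ S i.castSucc) :=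
    fun i => lexFirst_unique hlin (hBm i) (key i)
  ext x
  simp only [Set.mem_iUnion]
  constructor
  · intro hx
    obtain ⟨j, hjs, hjc⟩ := hblock x (hBbase.subset_ground hx)
    exact ⟨j, by rw [heq j]; exact ⟨hx, hjs, hjc⟩⟩
  · rintro ⟨j, hj⟩
    rw [heq j] at hj
    exact hj.1
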